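/- In any BDRG A, the following are equivalent: (1) (a → b) ∧ (b → d) ≤ a → d holds for all a, b, d ∈ A (transitivity axiom (Tr)); (2) a • c ≤ (a • c) • c holds for all a, c ∈ A (the contraction-type rule (tr)). -/
import Mathlib


/-- A bounded distributive lattice-ordered residuated groupoid (BDRG):
a bounded distributive lattice with operations `prod` (•), `imp` (→), `limp` (←)
satisfying the residuation law: a • b ≤ c ↔ b ≤ a → c ↔ a ≤ c ← b. -/
structure BDRG (A : Type*) [DistribLattice A] [BoundedOrder A] where
  prod : A → A → A
  imp : A → A → A
  limp : A → A → A
  res_imp : ∀ a b c : A, prod a b ≤ c ↔ b ≤ imp a c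
  res_limp : ∀ a b c : A, prod a b ≤ c ↔ a ≤ limp c b

lemma BDRG.prod_mono_right {A : Type*} [DistribLattice A] [BoundedOrder A]
    (G : BDRG A) {a x y : A} (h : x ≤ y) : G.prod a x ≤ G.prod a y :=
  (G.res_imp a x _).mpr (h.trans ((G.res_imp a y _).mp le_rfl))

lemma BDRG.prod_mono_left {A : Type*} [DistribLattice A] [BoundedOrder A]
    (G : BDRG A) {x y c : A} (h : x ≤ y) : G.prod x c ≤ G.prod y c :=
  (G.res_limp x c _).mpr (h.trans ((G.res_limp y c _).mp le_rfl))

theorem corr_Tr_tr {A : Type*} [DistribLattice A] [BoundedOrder A] (G : BDRG A) :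
    (∀ a b d : A, G.imp a b ⊓ G.imp b d ≤ G.imp a d) ↔
    (∀ a c : A, G.prod a c ≤ G.prod (G.prod a c) c) := by
  constructor
  · intro Tr a c
    rw [G.res_imp]
    have h1 : c ≤ G.imp a (G.prod a c) := (G.res_imp a c _).mp le_rfl
    have h2 : c ≤ G.imp (G.prod a c) (G.prod (G.prod a c) c) :=
      (G.res_imp _ c _).mp le_rfl
    exact (le_inf h1 h2).trans (Tr a (G.prod a c) _)
  · intro tr a b d
    rw [← G.res_imp]
    set x := G.imp a b ⊓ G.imp b d with hx
    have h1 : G.prod a x ≤ b :=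
      (G.prod_mono_right inf_le_left).trans ((G.res_imp a _ b).mpr le_rfl)
    have h2 : G.prod b x ≤ d :=
      (G.prod_mono_right inf_le_right).trans ((G.res_imp b _ d).mpr le_rfl)
    exact (tr a x).trans ((G.prod_mono_left h1).trans h2)
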